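/- Let n ≥ 1, let a : (Fin n → ℕ) → ℝ with a k ≥ 0 for all k, and assume that for every z : Fin n → ℝ with 0 ≤ z i < 1 for all i, the family k ↦ a k · ∏_i (z i)^(k i) is summable. Let Z : ℝ → (Fin n → ℝ) be continuous on [0,1] with Z 1 = (1,…,1) and 0 ≤ (Z t) i < 1 for all t ∈ [0,1) and all i, and define f(t) = ∑'_k a k · ∏_i ((Z t) i)^(k i) for t ∈ [0,1). If f(t) tends to a finite limit L as t → 1 within [0,1), then the family a is summable and ∑'_k a k = L. -/

import Mathlib

theorem stmt13 (n : ℕ) (hn : 1 ≤ n) (a : (Fin n → ℕ) → ℝ) (ha : ∀ k, 0 ≤ a k)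
    (hsum : ∀ z : Fin n → ℝ, (∀ i, 0 ≤ z i ∧ z i < 1) →
      Summable (fun k : Fin n → ℕ => a k * ∏ i, (z i) ^ (k i)))
    (Z : ℝ → (Fin n → ℝ)) (hZcont : ContinuousOn Z (Set.Icc (0 : ℝ) 1))
    (hZ1 : Z 1 = fun _ => 1)
    (hZlt : ∀ t ∈ Set.Ico (0 : ℝ) 1, ∀ i, 0 ≤ Z t i ∧ Z t i < 1)
    (L : ℝ)
    (hlim : Filter.Tendsto
      (fun t => ∑' k : Fin n → ℕ, a k * ∏ i, (Z t i) ^ (k i))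
      (nhdsWithin 1 (Set.Ico (0 : ℝ) 1)) (nhds L)) :
    Summable a ∧ ∑' k, a k = L := by
  have hne : (nhdsWithin (1 : ℝ) (Set.Ico (0 : ℝ) 1)).NeBot := by
    apply mem_closure_iff_nhdsWithin_neBot.mp
    rw [closure_Ico (by norm_num : (0:ℝ) ≠ 1)]
    exact Set.right_mem_Icc.mpr zero_le_one
  -- Z tends to Z 1 along the filter
  have hZt : Filter.Tendsto Z (nhdsWithin 1 (Set.Ico (0 : ℝ) 1)) (nhds (Z 1)) := by
    have := (hZcont 1 (Set.right_mem_Icc.mpr zero_le_one))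
    exact this.mono_left (nhdsWithin_mono _ Set.Ico_subset_Icc_self)
  -- key: every finite partial sum of a is ≤ L
  have key : ∀ F : Finset (Fin n → ℕ), ∑ k ∈ F, a k ≤ L := by
    intro F
    have hcont : Filter.Tendsto (fun t => ∑ k ∈ F, a k * ∏ i, (Z t i) ^ (k i))
        (nhdsWithin 1 (Set.Ico (0 : ℝ) 1)) (nhds (∑ k ∈ F, a k)) := by
      have h2 : Continuous (fun z : Fin n → ℝ => ∑ k ∈ F, a k * ∏ i, (z i) ^ (k i)) := by
        continuity
      have := (h2.tendsto (Z 1)).comp hZt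
      simpa [hZ1, Function.comp_def] using this
    refine le_of_tendsto_of_tendsto hcont hlim ?_
    filter_upwards [self_mem_nhdsWithin] with t ht
    exact Summable.sum_le_tsum F (fun k _ => mul_nonneg (ha k)
      (Finset.prod_nonneg fun i _ => pow_nonneg (hZlt t ht i).1 _)) (hsum _ (hZlt t ht))
  have hS : Summable a := summable_of_sum_le ha key
  refine ⟨hS, le_antisymm (Summable.tsum_le_of_sum_le hS key) ?_⟩
  refine le_of_tendsto_of_tendsto hlim tendsto_const_nhds ?_
  filter_upwards [self_mem_nhdsWithin] with t ht
  refine Summable.tsum_le_tsum (fun k => ?_) (hsum _ (hZlt t ht)) hS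
  calc a k * ∏ i, (Z t i) ^ (k i) ≤ a k * 1 := by
        refine mul_le_mul_of_nonneg_left ?_ (ha k)
        refine Finset.prod_le_one (fun i _ => pow_nonneg (hZlt t ht i).1 _)
          (fun i _ => pow_le_one₀ (hZlt t ht i).1 (hZlt t ht i).2.le)
    _ = a k := mul_one _
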